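/- (Non-concentration of the test functions at scale tᵢ.) With φ₁ as above (φ₁(y) = log[(1+t̃₂² d(x₂,y)²)/(1+t̃₁² d(x₁,y)²)²]), there exists C = C(δ,Σ) > 0 such that for every r > 0 and every x ∈ Σ: ∫_{B_x(r t₁)} e^{φ₁} dV ≤ C r² (t₁²/t₂²). -/

import Mathlib

open MeasureTheory Metric Real

set_option maxHeartbeats 1000000 in
/-- Non-concentration of the test functions at scale `t₁`. In the setup of the test-function
estimates (compact Ahlfors 2-regular metric probability space, parameters in `𝒳_ν`, with
`φ₁(y) = log[(1 + t̃₂² d(x₂,y)²)/(1 + t̃₁² d(x₁,y)²)²]`), there exists `C = C(δ,Σ) > 0` such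
that for every `r > 0` and every `x`: `∫_{B_x(r t₁)} e^{φ₁} ≤ C r² t₁²/t₂²`. -/
theorem stmt11 {S : Type*} [MetricSpace S] [CompactSpace S] [MeasurableSpace S]
    [BorelSpace S] (μ : Measure S) [IsProbabilityMeasure μ]
    (c₁ c₂ s₀ : ℝ) (hc₁ : 0 < c₁) (hc₂ : 0 < c₂) (hs₀ : 0 < s₀)
    (hvol_lower : ∀ (p : S) (s : ℝ), 0 < s → s ≤ s₀ →
      ENNReal.ofReal (c₁ * s ^ 2) ≤ μ (ball p s))
    (hvol_upper : ∀ (p : S) (s : ℝ), 0 < s → μ (ball p s) ≤ ENNReal.ofReal (c₂ * s ^ 2))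
    (δ : ℝ) (hδ : 0 < δ) (hδs : δ ≤ s₀) :
    ∃ ν₀ : ℝ, 0 < ν₀ ∧ ν₀ < δ ∧ ∃ C : ℝ, 0 < C ∧
      ∀ (x₁ x₂ : S) (t₁ t₂ : ℝ), 0 < t₁ → t₁ ≤ δ → 0 < t₂ → t₂ ≤ δ →
        ν₀ ^ 2 ≤ min t₁ t₂ → min t₁ t₂ ≤ ν₀ →
        (δ ^ 4 ≤ |t₁ - t₂| ^ 2 + dist x₁ x₂ ^ 2 ∨ max t₁ t₂ = δ) →
        ∀ (r : ℝ), 0 < r → ∀ x : S,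
          (∫ y in ball x (r * t₁),
              exp (log ((1 + (if t₂ ≤ δ / 2 then 1 / t₂ else -(4 / δ ^ 2) * (t₂ - δ)) ^ 2
                      * dist x₂ y ^ 2) /
                    (1 + (if t₁ ≤ δ / 2 then 1 / t₁ else -(4 / δ ^ 2) * (t₁ - δ)) ^ 2
                      * dist x₁ y ^ 2) ^ 2)) ∂μ) ≤ C * r ^ 2 * (t₁ ^ 2 / t₂ ^ 2) := by
  refine ⟨δ / 2, by linarith, by linarith, ?_⟩
  set D := Metric.diam (Set.univ : Set S) with hDdef
  have hD : 0 ≤ D := Metric.diam_nonneg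
  refine ⟨c₂ * (δ ^ 2 + 4 * D ^ 2), by positivity, ?_⟩
  intro x₁ x₂ t₁ t₂ ht₁ ht₁δ ht₂ ht₂δ _ _ _ r hr x
  set s₂ := (if t₂ ≤ δ / 2 then 1 / t₂ else -(4 / δ ^ 2) * (t₂ - δ)) with hs₂def
  set s₁ := (if t₁ ≤ δ / 2 then 1 / t₁ else -(4 / δ ^ 2) * (t₁ - δ)) with hs₁def
  -- pointwise bound on the integrand
  have key : ∀ y : S,
      exp (log ((1 + s₂ ^ 2 * dist x₂ y ^ 2) / (1 + s₁ ^ 2 * dist x₁ y ^ 2) ^ 2))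
        ≤ (δ ^ 2 + 4 * D ^ 2) / t₂ ^ 2 := by
    intro y
    have hA : (0:ℝ) < 1 + s₂ ^ 2 * dist x₂ y ^ 2 := by positivity
    have hB : (1:ℝ) ≤ 1 + s₁ ^ 2 * dist x₁ y ^ 2 := by
      have := mul_nonneg (sq_nonneg s₁) (sq_nonneg (dist x₁ y)); linarith
    have hB2 : (1:ℝ) ≤ (1 + s₁ ^ 2 * dist x₁ y ^ 2) ^ 2 := one_le_pow₀ hB
    have hz : (0:ℝ) < (1 + s₂ ^ 2 * dist x₂ y ^ 2) / (1 + s₁ ^ 2 * dist x₁ y ^ 2) ^ 2 :=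
      div_pos hA (by linarith)
    rw [Real.exp_log hz]
    have h1 : (1 + s₂ ^ 2 * dist x₂ y ^ 2) / (1 + s₁ ^ 2 * dist x₁ y ^ 2) ^ 2
        ≤ 1 + s₂ ^ 2 * dist x₂ y ^ 2 := div_le_self hA.le hB2
    have hs₂sq : s₂ ^ 2 ≤ 4 / t₂ ^ 2 := by
      by_cases h : t₂ ≤ δ / 2
      · rw [hs₂def, if_pos h, div_pow, one_pow,
          div_le_div_iff₀ (by positivity) (by positivity)]
        nlinarith [sq_nonneg t₂]
      · push_neg at h
        rw [hs₂def, if_neg (not_le.mpr h)]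
        have heq : (-(4 / δ ^ 2) * (t₂ - δ)) ^ 2 = 16 * (t₂ - δ) ^ 2 / δ ^ 4 := by
          field_simp; ring
        rw [heq, div_le_div_iff₀ (by positivity) (by positivity)]
        have ha : (t₂ - δ) ^ 2 ≤ δ ^ 2 / 4 := by nlinarith
        have hb : t₂ ^ 2 ≤ δ ^ 2 := by nlinarith
        nlinarith [mul_le_mul ha hb (sq_nonneg t₂) (by positivity : (0:ℝ) ≤ δ ^ 2 / 4)]
    have hd : dist x₂ y ≤ D :=
      dist_le_diam_of_mem isCompact_univ.isBounded trivial trivial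
    have hd2 : dist x₂ y ^ 2 ≤ D ^ 2 := by nlinarith [dist_nonneg (x := x₂) (y := y)]
    have h2 : s₂ ^ 2 * dist x₂ y ^ 2 ≤ 4 / t₂ ^ 2 * D ^ 2 :=
      mul_le_mul hs₂sq hd2 (sq_nonneg _) (by positivity)
    have h3 : (1:ℝ) ≤ δ ^ 2 / t₂ ^ 2 := by
      rw [le_div_iff₀ (by positivity)]; nlinarith
    have h4 : (δ ^ 2 + 4 * D ^ 2) / t₂ ^ 2 = δ ^ 2 / t₂ ^ 2 + 4 / t₂ ^ 2 * D ^ 2 := by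
      ring
    linarith
  have hball : μ (ball x (r * t₁)) < ⊤ := measure_lt_top _ _
  have hnorm : ‖∫ y in ball x (r * t₁),
      exp (log ((1 + s₂ ^ 2 * dist x₂ y ^ 2) / (1 + s₁ ^ 2 * dist x₁ y ^ 2) ^ 2)) ∂μ‖
      ≤ (δ ^ 2 + 4 * D ^ 2) / t₂ ^ 2 * (μ (ball x (r * t₁))).toReal := by
    refine norm_setIntegral_le_of_norm_le_const hball ?_
    intro y _
    rw [Real.norm_eq_abs, abs_of_nonneg (Real.exp_pos _).le]
    exact key y
  have htoReal : (μ (ball x (r * t₁))).toReal ≤ c₂ * (r * t₁) ^ 2 := by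
    have := hvol_upper x (r * t₁) (by positivity)
    exact ENNReal.toReal_le_of_le_ofReal (by positivity) this
  calc (∫ y in ball x (r * t₁),
          exp (log ((1 + s₂ ^ 2 * dist x₂ y ^ 2) / (1 + s₁ ^ 2 * dist x₁ y ^ 2) ^ 2)) ∂μ)
      ≤ ‖∫ y in ball x (r * t₁),
          exp (log ((1 + s₂ ^ 2 * dist x₂ y ^ 2) / (1 + s₁ ^ 2 * dist x₁ y ^ 2) ^ 2)) ∂μ‖ :=
        le_abs_self _
    _ ≤ (δ ^ 2 + 4 * D ^ 2) / t₂ ^ 2 * (μ (ball x (r * t₁))).toReal := hnorm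
    _ ≤ (δ ^ 2 + 4 * D ^ 2) / t₂ ^ 2 * (c₂ * (r * t₁) ^ 2) := by
        exact mul_le_mul_of_nonneg_left htoReal (by positivity)
    _ = c₂ * (δ ^ 2 + 4 * D ^ 2) * r ^ 2 * (t₁ ^ 2 / t₂ ^ 2) := by
        field_simp
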